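/- Every word of length f over a q-letter alphabet, where f = (L+1)(q^L + 1) - 1 and every word of length L over Fin q contains a copy of Z_n, contains two identical subwords of length at most L that are copies of Z_n and are separated by at least one letter; consequently it contains a copy of Z_{n+1}. -/

import Mathlib

/-- Zimin words over the alphabet `ℕ`. -/
def Zimin : ℕ → List ℕ
  | 0 => []
  | n + 1 => Zimin n ++ [n + 1] ++ Zimin n

/-- `X` is a copy of `Z_n`: it is obtained by substituting a nonempty word for
each letter of the Zimin word `Z_n`. -/
def IsZiminCopy {α : Type*} (n : ℕ) (X : List α) : Prop :=
  ∃ σ : ℕ → List α, (∀ i, σ i ≠ []) ∧ X = (Zimin n).flatMap σ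

/-- `w` contains a copy of `Z_n` as a contiguous subword (infix). -/
def ContainsZimin {α : Type*} (n : ℕ) (w : List α) : Prop :=
  ∃ X : List α, IsZiminCopy n X ∧ X <:+: w

/-- If every word of length `L` over `Fin q` contains a copy of `Z_n`, then every
word of length `(L+1)(q^L+1) - 1` contains two identical subwords of length at
most `L` which are copies of `Z_n`, separated by at least one letter; in
particular it contains a copy of `Z_{n+1}`. -/
lemma zimin_mem_le (n : ℕ) : ∀ x ∈ Zimin n, x ≤ n := by
  induction n with
  | zero => simp [Zimin]
  | succ n ih =>
    intro x hx
    simp only [Zimin, List.mem_append, List.mem_singleton] at hx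
    rcases hx with (hx | rfl) | hx
    · exact (ih x hx).trans (Nat.le_succ n)
    · exact le_rfl
    · exact (ih x hx).trans (Nat.le_succ n)

lemma copy_step {α : Type*} {n : ℕ} {X Y : List α} (hX : IsZiminCopy n X) (hY : Y ≠ []) :
    IsZiminCopy (n + 1) (X ++ Y ++ X) := by
  obtain ⟨σ, hσ, rfl⟩ := hX
  refine ⟨fun i => if i = n + 1 then Y else σ i, ?_, ?_⟩
  · intro i
    by_cases h : i = n + 1 <;> simp [h, hY, hσ i]
  · have hcong : ∀ l : List ℕ, (∀ x ∈ l, x ≤ n) →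
        l.flatMap (fun i => if i = n + 1 then Y else σ i) = l.flatMap σ := by
      intro l
      induction l with
      | nil => simp
      | cons a t ih =>
        intro h
        have ha : a ≠ n + 1 := by have := h a List.mem_cons_self; omega
        simp only [List.flatMap_cons, if_neg ha, ih fun x hx => h x (List.mem_cons_of_mem a hx)]
    simp [Zimin, List.flatMap_append, hcong (Zimin n) (zimin_mem_le n)]

/-- If a block of `w` (take `L` of drop `c`) equals `u ++ X ++ v`, then `X`
occurs in `w` at position `c + u.length`. -/
lemma occ_of_block {α : Type*} (w : List α) (c L : ℕ) (u X v : List α)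
    (hblock : (w.drop c).take L = u ++ X ++ v) :
    (w.drop (c + u.length)).take X.length = X := by
  have hle : u.length + X.length ≤ L := by
    have := congrArg List.length hblock
    simp [List.length_take] at this
    omega
  have h2 : (w.drop (c + u.length)).take (L - u.length) = X ++ v := by
    have : ((w.drop c).take L).drop u.length = X ++ v := by
      rw [hblock, List.append_assoc, List.drop_left]
    rwa [List.drop_take, List.drop_drop] at this
  have := congrArg (List.take X.length) h2
  rwa [List.take_take, Nat.min_eq_left (by omega), List.take_left] at this

lemma infix_of_two_occ {α : Type*} (w X : List α) (a b : ℕ)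
    (ha : (w.drop a).take X.length = X) (hb : (w.drop b).take X.length = X)
    (hab : a + X.length < b) (hbw : b + X.length ≤ w.length) :
    ∃ Y : List α, Y ≠ [] ∧ (X ++ Y ++ X) <:+: w := by
  set k := X.length with hk
  set d := b - (a + k) with hd
  refine ⟨(w.drop (a + k)).take d, ?_, ?_⟩
  · have : ((w.drop (a + k)).take d).length = min d (w.length - (a + k)) := by
      simp [List.length_take]
    intro hnil
    rw [hnil] at this
    simp at this
    omega
  · have key : X ++ (w.drop (a + k)).take d ++ X = (w.drop a).take (k + (d + k)) := by
      rw [List.take_add, List.take_add, List.drop_drop, List.drop_drop, ha,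
        show a + k + d = b by omega, hb, List.append_assoc]
    rw [key]
    exact ((List.take_prefix _ _).isInfix).trans ((List.drop_suffix a w).isInfix)

theorem two_copies_and_step (n q L : ℕ)
    (hL : ∀ w : List (Fin q), w.length = L → ContainsZimin n w)
    (w : List (Fin q)) (hw : w.length = (L + 1) * (q ^ L + 1) - 1) :
    (∃ X Y : List (Fin q), IsZiminCopy n X ∧ X.length ≤ L ∧ Y ≠ [] ∧
      (X ++ Y ++ X) <:+: w) ∧
    ContainsZimin (n + 1) w := by
  have hwlen : w.length = (L + 1) * q ^ L + L := by
    rw [hw]; ring_nf; omega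
  have hlen : ∀ i : ℕ, i ≤ q ^ L → ((w.drop (i * (L + 1))).take L).length = L := by
    intro i hi
    have hmul : i * (L + 1) ≤ q ^ L * (L + 1) := Nat.mul_le_mul_right _ hi
    rw [List.length_take, List.length_drop, hwlen]
    have : (L + 1) * q ^ L = q ^ L * (L + 1) := Nat.mul_comm _ _
    omega
  -- pigeonhole
  have hcard : Fintype.card (List.Vector (Fin q) L) < Fintype.card (Fin (q ^ L + 1)) := by
    simp [card_vector]
  have hf : ∃ i₀ j₀ : Fin (q ^ L + 1), i₀ ≠ j₀ ∧
      (⟨(w.drop ((i₀ : ℕ) * (L + 1))).take L, hlen i₀ (Nat.lt_succ_iff.mp i₀.isLt)⟩ :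
        List.Vector (Fin q) L) =
      ⟨(w.drop ((j₀ : ℕ) * (L + 1))).take L, hlen j₀ (Nat.lt_succ_iff.mp j₀.isLt)⟩ := by
    exact Fintype.exists_ne_map_eq_of_card_lt (β := List.Vector (Fin q) L) _ hcard
  obtain ⟨i₀, j₀, hne, heq⟩ := hf
  have hblocks : ∀ i j : ℕ, i < j → j ≤ q ^ L →
      (w.drop (i * (L + 1))).take L = (w.drop (j * (L + 1))).take L →
      (∃ X Y : List (Fin q), IsZiminCopy n X ∧ X.length ≤ L ∧ Y ≠ [] ∧
        (X ++ Y ++ X) <:+: w) := by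
    intro i j hij hj hbl
    obtain ⟨X, hX, hinf⟩ := hL _ (hlen i (by omega))
    obtain ⟨u, v, huv⟩ := hinf
    have hle : u.length + X.length + v.length ≤ L := by
      have := congrArg List.length huv.symm
      simp [List.length_take] at this
      omega
    have ha := occ_of_block w (i * (L + 1)) L u X v huv.symm
    have hb := occ_of_block w (j * (L + 1)) L u X v (hbl ▸ huv.symm)
    have hij1 : (i + 1) * (L + 1) ≤ j * (L + 1) := Nat.mul_le_mul_right _ hij
    have hjq : j * (L + 1) ≤ q ^ L * (L + 1) := Nat.mul_le_mul_right _ hj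
    have hcomm : (L + 1) * q ^ L = q ^ L * (L + 1) := Nat.mul_comm _ _
    obtain ⟨Y, hY, hYinf⟩ := infix_of_two_occ w X _ _ ha hb
      (by have : (i + 1) * (L + 1) = i * (L + 1) + (L + 1) := by ring
          omega)
      (by omega)
    exact ⟨X, Y, hX, by omega, hY, hYinf⟩
  have hfirst : ∃ X Y : List (Fin q), IsZiminCopy n X ∧ X.length ≤ L ∧ Y ≠ [] ∧
      (X ++ Y ++ X) <:+: w := by
    have heq' : (w.drop ((i₀ : ℕ) * (L + 1))).take L = (w.drop ((j₀ : ℕ) * (L + 1))).take L :=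
      congrArg Subtype.val heq
    have hne' : (i₀ : ℕ) ≠ (j₀ : ℕ) := fun h => hne (Fin.ext h)
    rcases Nat.lt_or_ge (i₀ : ℕ) (j₀ : ℕ) with h | h
    · exact hblocks i₀ j₀ h (Nat.lt_succ_iff.mp j₀.isLt) heq'
    · exact hblocks j₀ i₀ (by omega) (Nat.lt_succ_iff.mp i₀.isLt) heq'.symm
  refine ⟨hfirst, ?_⟩
  obtain ⟨X, Y, hX, _, hY, hinf⟩ := hfirst
  exact ⟨X ++ Y ++ X, copy_step hX hY, hinf⟩
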